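/- Let p be an odd prime, H ≤ (Z/pZ)^× a subgroup of index ℓ ≥ 3 containing −1 and 2, and g a primitive root. For each k with 1 ≤ k ≤ ℓ−1, the number of squares in the set 1 + g^k H equals (1/2)·Σ_{i=0}^{ℓ−1} A(i, k−i), where A(i,j) = |(1 + g^i H) ∩ g^j H|. -/

import Mathlib

def coset (p : ℕ) (g : (ZMod p)ˣ) (H : Subgroup (ZMod p)ˣ) (i : ℤ) : Set (ZMod p) :=
  (fun h : (ZMod p)ˣ => ((g ^ i * h : (ZMod p)ˣ) : ZMod p)) '' (H : Set (ZMod p)ˣ)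

noncomputable def cyc (p : ℕ) (g : (ZMod p)ˣ) (H : Subgroup (ZMod p)ˣ) (i j : ℤ) : ℕ :=
  (((fun x => 1 + x) '' coset p g H i) ∩ coset p g H j).ncard

section aux
variable {p : ℕ} [Fact p.Prime] {H : Subgroup (ZMod p)ˣ} {g : (ZMod p)ˣ}

lemma mem_coset {i : ℤ} {x : ZMod p} :
    x ∈ coset p g H i ↔ ∃ h, h ∈ H ∧ x = ((g ^ i * h : (ZMod p)ˣ) : ZMod p) := by
  constructor
  · rintro ⟨h, hh, rfl⟩; exact ⟨h, hh, rfl⟩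
  · rintro ⟨h, hh, rfl⟩; exact ⟨h, hh, rfl⟩

lemma coset_ne_zero {i : ℤ} {x : ZMod p} (hx : x ∈ coset p g H i) : x ≠ 0 := by
  obtain ⟨h, -, rfl⟩ := mem_coset.mp hx; exact Units.ne_zero _

lemma gpow_mem_iff {ℓ : ℕ} (hℓ : H.index = ℓ)
    (hg : ∀ x : (ZMod p)ˣ, x ∈ Subgroup.zpowers g) (m : ℤ) :
    g ^ m ∈ H ↔ (ℓ : ℤ) ∣ m := by
  have hord : orderOf ((g : (ZMod p)ˣ ⧸ H)) = ℓ := by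
    have htop : Subgroup.zpowers ((g : (ZMod p)ˣ ⧸ H)) = ⊤ := by
      rw [Subgroup.eq_top_iff']
      intro q
      obtain ⟨x, rfl⟩ := QuotientGroup.mk_surjective q
      obtain ⟨n, rfl⟩ := hg x
      exact ⟨n, by simp [QuotientGroup.mk_zpow]⟩
    rw [← Nat.card_zpowers, htop, Subgroup.card_top]
    exact hℓ
  rw [← QuotientGroup.eq_one_iff, QuotientGroup.mk_zpow, ← hord,
    orderOf_dvd_iff_zpow_eq_one]

lemma coe_mem_coset_iff {ℓ : ℕ} (hℓ : H.index = ℓ)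
    (hg : ∀ x : (ZMod p)ˣ, x ∈ Subgroup.zpowers g) {h : (ZMod p)ˣ} (hh : h ∈ H) (m i : ℤ) :
    ((g ^ m * h : (ZMod p)ˣ) : ZMod p) ∈ coset p g H i ↔ (ℓ : ℤ) ∣ m - i := by
  constructor
  · intro hx
    obtain ⟨h', hh', heq⟩ := mem_coset.mp hx
    have key : g ^ m * h = g ^ i * h' := Units.ext heq
    have e : g ^ (m - i) = h' * h⁻¹ := by
      have e1 : g ^ (m - i) * (g ^ i * h) = g ^ m * h := by
        rw [← mul_assoc, ← zpow_add, sub_add_cancel]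
      have e2 : (h' * h⁻¹) * (g ^ i * h) = g ^ i * h' := by
        simp [mul_comm, mul_assoc, mul_left_comm]
      exact mul_right_cancel (e1.trans (key.trans e2.symm))
    rw [← gpow_mem_iff hℓ hg, e] at *
    exact H.mul_mem hh' (H.inv_mem hh)
  · intro hdvd
    refine mem_coset.mpr ⟨g ^ (m - i) * h, H.mul_mem ((gpow_mem_iff hℓ hg _).mpr hdvd) hh, ?_⟩
    have e : g ^ i * (g ^ (m - i) * h) = g ^ m * h := by
      rw [← mul_assoc, ← zpow_add]
      congr 2
      omega
    rw [e]

lemma coset_smul {u : (ZMod p)ˣ} (hu : u ∈ H) {i : ℤ} {x : ZMod p}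
    (hx : x ∈ coset p g H i) : (u : ZMod p) * x ∈ coset p g H i := by
  obtain ⟨h, hh, rfl⟩ := mem_coset.mp hx
  refine mem_coset.mpr ⟨u * h, H.mul_mem hu hh, ?_⟩
  rw [← Units.val_mul, mul_left_comm]

end aux

theorem stmt_8 (p : ℕ) [Fact p.Prime] (hodd : Odd p)
    (H : Subgroup (ZMod p)ˣ) (ℓ : ℕ) (hℓ : H.index = ℓ) (hℓ3 : 3 ≤ ℓ)
    (hneg : (-1 : (ZMod p)ˣ) ∈ H) (h2 : ∃ u : (ZMod p)ˣ, (u : ZMod p) = 2 ∧ u ∈ H)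
    (g : (ZMod p)ˣ) (hg : ∀ x : (ZMod p)ˣ, x ∈ Subgroup.zpowers g)
    (k : ℕ) (hk1 : 1 ≤ k) (hk2 : k ≤ ℓ - 1) :
    2 * ({x ∈ (fun x => 1 + x) '' coset p g H (k : ℤ) | IsSquare x}).ncard
      = ∑ i ∈ Finset.range ℓ, cyc p g H (i : ℤ) ((k : ℤ) - (i : ℤ)) := by
  classical
  obtain ⟨u2, hu2, hu2H⟩ := h2
  -- basic numeric facts
  have h20 : (2 : ZMod p) ≠ 0 := by
    intro h
    have hp2 : (p : ℕ) ∣ 2 := by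
      have := (ZMod.natCast_eq_zero_iff 2 p).mp (by exact_mod_cast h)
      exact this
    have hp2' : p = 2 :=
      (Nat.prime_dvd_prime_iff_eq (Fact.out) Nat.prime_two).mp hp2
    subst hp2'
    revert hodd
    decide
  have h40 : (4 : ZMod p) ≠ 0 := by
    intro h
    apply h20
    have h22 : (2 : ZMod p) * 2 = 4 := by norm_num
    rcases mul_eq_zero.mp (h22.trans h ▸ rfl : (2 : ZMod p) * 2 = 0) with h' | h' <;> exact h'
  have hkndvd : ¬ (ℓ : ℤ) ∣ (k : ℤ) := by
    rw [Int.natCast_dvd_natCast]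
    intro hd
    have := Nat.le_of_dvd (by omega) hd
    omega
  -- the sets
  set S : Set (ZMod p) :=
    {x ∈ (fun x => 1 + x) '' coset p g H (k : ℤ) | IsSquare x} with hSdef
  set T : Set (ZMod p) := {x : ZMod p | x * (1 + x) ∈ coset p g H (k : ℤ)} with hTdef
  set f : ℕ → Set (ZMod p) := fun i =>
    coset p g H (i : ℤ) ∩ (fun x => 1 + x) ⁻¹' coset p g H ((k : ℤ) - (i : ℤ)) with hfdef
  -- RHS: each cyclotomic number counts f i
  have hcyc : ∀ i : ℕ, cyc p g H (i : ℤ) ((k : ℤ) - (i : ℤ)) = (f i).toFinset.card := by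
    intro i
    rw [cyc, ← Set.image_inter_preimage, Set.ncard_image_of_injective _
      (add_right_injective (1 : ZMod p)), Set.ncard_eq_toFinset_card']
  -- disjointness of the pieces
  have hdisj : ∀ i ∈ Finset.range ℓ, ∀ j ∈ Finset.range ℓ, i ≠ j →
      Disjoint (f i).toFinset (f j).toFinset := by
    intro i hi j hj hij
    rw [Finset.disjoint_left]
    intro x hxi hxj
    rw [Set.mem_toFinset] at hxi hxj
    obtain ⟨h, hh, hx⟩ := mem_coset.mp hxi.1
    have hxj' : ((g ^ (i : ℤ) * h : (ZMod p)ˣ) : ZMod p) ∈ coset p g H (j : ℤ) := hx ▸ hxj.1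
    have hdvd : (ℓ : ℤ) ∣ (i : ℤ) - (j : ℤ) := (coe_mem_coset_iff hℓ hg hh _ _).mp hxj'
    rw [Finset.mem_range] at hi hj
    have hz : (i : ℤ) - (j : ℤ) = 0 := Int.eq_zero_of_abs_lt_dvd hdvd (by
      rw [abs_sub_lt_iff]
      constructor <;> omega)
    omega
  -- the union of the pieces is T
  have hunion : (Finset.range ℓ).biUnion (fun i => (f i).toFinset) = T.toFinset := by
    ext x
    simp only [Finset.mem_biUnion, Set.mem_toFinset, Finset.mem_range]
    constructor
    · rintro ⟨i, hi, hx1, hx2⟩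
      rw [Set.mem_preimage] at hx2
      obtain ⟨h, hh, hx⟩ := mem_coset.mp hx1
      obtain ⟨h', hh', hx'⟩ := mem_coset.mp hx2
      have e : (g ^ (i : ℤ) * h) * (g ^ ((k : ℤ) - (i : ℤ)) * h') = g ^ (k : ℤ) * (h * h') := by
        rw [mul_mul_mul_comm, ← zpow_add]
        congr 2
        omega
      have hx'' : 1 + x = ((g ^ ((k : ℤ) - (i : ℤ)) * h' : (ZMod p)ˣ) : ZMod p) := hx'
      show x * (1 + x) ∈ coset p g H (k : ℤ)
      have e2 : x * (1 + x) = ((g ^ (k : ℤ) * (h * h') : (ZMod p)ˣ) : ZMod p) := by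
        rw [hx'', hx, ← Units.val_mul, e]
      rw [e2]
      exact mem_coset.mpr ⟨h * h', H.mul_mem hh hh', rfl⟩
    · intro hxT
      have hx0 : x * (1 + x) ≠ 0 := coset_ne_zero hxT
      obtain ⟨hx1, hx2⟩ := mul_ne_zero_iff.mp hx0
      obtain ⟨u, hu⟩ := (isUnit_iff_ne_zero.mpr hx1)
      obtain ⟨v, hv⟩ := (isUnit_iff_ne_zero.mpr hx2)
      obtain ⟨h, hh, hprod⟩ := mem_coset.mp hxT
      have huv : u * v = g ^ (k : ℤ) * h := by
        apply Units.ext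
        rw [Units.val_mul, hu, hv, ← hprod]
      obtain ⟨m, hm0⟩ := hg u
      have hm : g ^ m = u := hm0
      have hl0 : (0:ℤ) < (ℓ:ℤ) := by exact_mod_cast (by omega : 0 < ℓ)
      refine ⟨(m % (ℓ:ℤ)).toNat, ?_, ?_, ?_⟩
      · have h1 : m % (ℓ:ℤ) < ℓ := Int.emod_lt_of_pos m hl0
        have h2' : 0 ≤ m % (ℓ:ℤ) := Int.emod_nonneg m (by omega)
        omega
      · -- x ∈ coset i
        have hcast : (((m % (ℓ:ℤ)).toNat : ℕ) : ℤ) = m % (ℓ:ℤ) :=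
          Int.toNat_of_nonneg (Int.emod_nonneg m (by omega))
        have hdvd1 : (ℓ:ℤ) ∣ m - ((m % (ℓ:ℤ)).toNat : ℤ) := by
          rw [hcast]
          exact Int.dvd_self_sub_of_emod_eq rfl
        have := (coe_mem_coset_iff hℓ hg H.one_mem m ((m % (ℓ:ℤ)).toNat : ℤ)).mpr hdvd1
        rwa [mul_one, hm, hu] at this
      · -- 1 + x ∈ coset (k - i)
        rw [Set.mem_preimage]
        have hvv : v = g ^ ((k:ℤ) - m) * h := by
          apply mul_left_cancel (a := g ^ m)
          rw [← mul_assoc, ← zpow_add, (by omega : m + ((k:ℤ) - m) = (k:ℤ)), hm, huv]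
        have hcast : (((m % (ℓ:ℤ)).toNat : ℕ) : ℤ) = m % (ℓ:ℤ) :=
          Int.toNat_of_nonneg (Int.emod_nonneg m (by omega))
        have hdvd2 : (ℓ:ℤ) ∣ ((k:ℤ) - m) - ((k:ℤ) - ((m % (ℓ:ℤ)).toNat : ℤ)) := by
          have h1 : (ℓ:ℤ) ∣ m - ((m % (ℓ:ℤ)).toNat : ℤ) := by
            rw [hcast]
            exact Int.dvd_self_sub_of_emod_eq rfl
          have e : ((k:ℤ) - m) - ((k:ℤ) - ((m % (ℓ:ℤ)).toNat : ℤ))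
              = -(m - ((m % (ℓ:ℤ)).toNat : ℤ)) := by ring
          rw [e]
          exact dvd_neg.mpr h1
        have := (coe_mem_coset_iff hℓ hg hh ((k:ℤ) - m) ((k:ℤ) - ((m % (ℓ:ℤ)).toNat : ℤ))).mpr hdvd2
        show 1 + x ∈ coset p g H ((k:ℤ) - (((m % (ℓ:ℤ)).toNat : ℕ) : ℤ))
        rwa [← hvv, hv] at this
  -- reduce RHS to counting T
  have hRHS : ∑ i ∈ Finset.range ℓ, cyc p g H (i:ℤ) ((k:ℤ) - (i:ℤ)) = T.toFinset.card := by
    rw [Finset.sum_congr rfl (fun i _ => hcyc i), ← Finset.card_biUnion hdisj, hunion]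
  rw [hRHS]
  -- nonvanishing of elements of S
  have hSne : ∀ s ∈ S, s ≠ 0 := by
    intro s hs h0
    obtain ⟨⟨y, hy, hys⟩, -⟩ := hs
    obtain ⟨h, hh, rfl⟩ := mem_coset.mp hy
    have hys' : 1 + ((g ^ (k:ℤ) * h : (ZMod p)ˣ) : ZMod p) = s := hys
    have hval : ((g ^ (k:ℤ) * h : (ZMod p)ˣ) : ZMod p) = ((-1 : (ZMod p)ˣ) : ZMod p) := by
      rw [Units.val_neg, Units.val_one]
      linear_combination hys' + h0
    have he : g ^ (k:ℤ) * h = -1 := Units.ext hval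
    have hgk : g ^ (k:ℤ) ∈ H := by
      have e : g ^ (k:ℤ) = -1 * h⁻¹ := eq_mul_inv_of_mul_eq he
      rw [e]
      exact H.mul_mem hneg (H.inv_mem hh)
    exact hkndvd ((gpow_mem_iff hℓ hg _).mp hgk)
  -- the squaring map x ↦ (2x+1)² sends T to S
  have hmaps : ∀ x ∈ T.toFinset, (2*x+1)^2 ∈ S.toFinset := by
    intro x hx
    rw [Set.mem_toFinset] at hx ⊢
    refine ⟨⟨((u2*u2 : (ZMod p)ˣ) : ZMod p) * (x * (1 + x)),
      coset_smul (H.mul_mem hu2H hu2H) hx, ?_⟩, ⟨2*x+1, by ring⟩⟩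
    show 1 + ((u2*u2 : (ZMod p)ˣ) : ZMod p) * (x * (1 + x)) = (2*x+1)^2
    rw [Units.val_mul, hu2]
    ring
  -- each fiber has exactly two elements
  have hfiber : ∀ s ∈ S.toFinset,
      (T.toFinset.filter (fun x => (2*x+1)^2 = s)).card = 2 := by
    intro s hsF
    rw [Set.mem_toFinset] at hsF
    have hs0 : s ≠ 0 := hSne s hsF
    obtain ⟨⟨y, hy, hys⟩, w, hw'⟩ := hsF
    have hys' : 1 + y = s := hys
    have hw0 : w ≠ 0 := by
      rintro rfl
      exact hs0 (by rw [hw', mul_zero])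
    have hy' : y = w * w - 1 := by linear_combination hys' + hw'
    have hab : ((w-1)/2 : ZMod p) ≠ (-w-1)/2 := by
      intro hEq
      apply hw0
      have e : w = (w-1)/2 - (-w-1)/2 := by
        field_simp
        ring
      rw [e, hEq, sub_self]
    -- membership of the two roots in T
    have hq4 : (((u2*u2)⁻¹ : (ZMod p)ˣ) : ZMod p) = (4 : ZMod p)⁻¹ := by
      rw [Units.val_inv_eq_inv_val, Units.val_mul, hu2]
      norm_num
    have hquarter : (4 : ZMod p)⁻¹ * y ∈ coset p g H (k:ℤ) := by
      rw [← hq4]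
      exact coset_smul (H.inv_mem (H.mul_mem hu2H hu2H)) hy
    have haT : ((w-1)/2 : ZMod p) ∈ T := by
      show ((w-1)/2 : ZMod p) * (1 + (w-1)/2) ∈ coset p g H (k:ℤ)
      have e : ((w-1)/2 : ZMod p) * (1 + (w-1)/2) = (4 : ZMod p)⁻¹ * y := by
        rw [hy']
        field_simp
        ring
      rw [e]
      exact hquarter
    have hbT : ((-w-1)/2 : ZMod p) ∈ T := by
      show ((-w-1)/2 : ZMod p) * (1 + (-w-1)/2) ∈ coset p g H (k:ℤ)
      have e : ((-w-1)/2 : ZMod p) * (1 + (-w-1)/2) = (4 : ZMod p)⁻¹ * y := by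
        rw [hy']
        field_simp
        ring
      rw [e]
      exact hquarter
    have hfa : (2*((w-1)/2 : ZMod p)+1)^2 = s := by
      have e : (2*((w-1)/2 : ZMod p)+1) = w := by
        field_simp
        ring
      rw [e]
      linear_combination -hw'
    have hfb : (2*((-w-1)/2 : ZMod p)+1)^2 = s := by
      have e : (2*((-w-1)/2 : ZMod p)+1) = -w := by
        field_simp
        ring
      rw [e]
      linear_combination -hw'
    have hfe : T.toFinset.filter (fun x => (2*x+1)^2 = s)
        = {((w-1)/2 : ZMod p), ((-w-1)/2 : ZMod p)} := by
      ext x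
      simp only [Finset.mem_filter, Set.mem_toFinset, Finset.mem_insert, Finset.mem_singleton]
      constructor
      · rintro ⟨-, hfx⟩
        have hq : (2*x+1-w)*(2*x+1+w) = 0 := by linear_combination hfx + hw'
        rcases mul_eq_zero.mp hq with h' | h'
        · left
          field_simp
          linear_combination h'
        · right
          field_simp
          linear_combination h'
      · rintro (rfl | rfl)
        · exact ⟨haT, hfa⟩
        · exact ⟨hbT, hfb⟩
    rw [hfe, Finset.card_insert_of_notMem (by simpa using hab), Finset.card_singleton]
  -- conclude
  have hcount : T.toFinset.card = 2 * S.toFinset.card := by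
    rw [Finset.card_eq_sum_card_fiberwise hmaps, Finset.sum_congr rfl hfiber,
      Finset.sum_const, smul_eq_mul, mul_comm]
  rw [hcount, Set.ncard_eq_toFinset_card' S]
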